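/- Let R = LaurentPolynomial ℂ, t = T + T⁻¹ ∈ R, and fix an integer r. Let B_r be the quotient of the multivariate polynomial R-algebra on variables X_k indexed by {k : ℤ // r ≤ k} by the ideal generated by X_k · X_{k-1} − t · X_k + 1 for all k with k − 1 ≥ r. Then for every integer n with n ≥ −(r+1), there exists a ring homomorphism φ_n : B_r → RatFunc ℂ whose restriction to scalars R is the ring homomorphism LaurentPolynomial ℂ → RatFunc ℂ sending T to X, and which sends the image of X_k to (X^(n+k+1) − X^(-(n+k+1))) / (X^(n+k+2) − X^(-(n+k+2))) for every k ≥ r. (This is the paper's assertion, after Lemma 6.7, that for each n > −(r+2) there is an algebra representation of 𝓑_{≥r} obtained by mapping b_k to [n+k+1]/[n+k+2]; it rests on the identity [n+k]/[n+k+2] = [2]·[n+k+1]/[n+k+2] − 1.) -/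

import Mathlib

open LaurentPolynomial

noncomputable section

/-- The ground ring `ℂ[q,q⁻¹]`. -/
abbrev GroundRing : Type := LaurentPolynomial ℂ

/-- `[2] = q + q⁻¹` in `ℂ[q,q⁻¹]`. -/
noncomputable def qtwo : GroundRing := T 1 + T (-1)

/-- The ideal of relations `X_k X_{k-1} - [2] X_k + 1` (for `k - 1 ≥ r`) in the
polynomial algebra over `ℂ[q,q⁻¹]` on variables `X_k`, `k ≥ r`. -/
noncomputable def relIdeal (r : ℤ) : Ideal (MvPolynomial {k : ℤ // r ≤ k} GroundRing) :=
  Ideal.span { f | ∃ (k : ℤ) (hk : r ≤ k) (hk' : r ≤ k - 1),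
    f = MvPolynomial.X ⟨k, hk⟩ * MvPolynomial.X ⟨k - 1, hk'⟩
        - MvPolynomial.C qtwo * MvPolynomial.X ⟨k, hk⟩ + 1 }

/-- The algebra `𝓑_{≥r}`. -/
abbrev BoxAlgebra (r : ℤ) : Type := MvPolynomial {k : ℤ // r ≤ k} GroundRing ⧸ relIdeal r

/-- The embedding `ℂ[q,q⁻¹] → ℂ(X)` sending `T` (i.e. `q`) to `X`. -/
noncomputable def laurentToRatFunc : LaurentPolynomial ℂ →ₐ[ℂ] RatFunc ℂ :=
  AddMonoidAlgebra.lift ℂ (RatFunc ℂ) ℤ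
    { toFun := fun n => (RatFunc.X : RatFunc ℂ) ^ (Multiplicative.toAdd n)
      map_one' := by simp
      map_mul' := fun a b => by
        simp only [toAdd_mul]
        exact zpow_add₀ RatFunc.X_ne_zero _ _ }

lemma laurentToRatFunc_T (z : ℤ) : laurentToRatFunc (T z) = (RatFunc.X : RatFunc ℂ) ^ z := by
  rw [laurentToRatFunc, LaurentPolynomial.T, AddMonoidAlgebra.lift_single]
  simp

lemma sne (j : ℤ) (hj : 1 ≤ j) :
    (RatFunc.X : RatFunc ℂ) ^ j - RatFunc.X ^ (-j) ≠ 0 := by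
  have hu : (RatFunc.X : RatFunc ℂ) ≠ 0 := RatFunc.X_ne_zero
  intro h
  have h1 : (RatFunc.X : RatFunc ℂ) ^ j = RatFunc.X ^ (-j) := sub_eq_zero.mp h
  have h2 : (RatFunc.X : RatFunc ℂ) ^ (j + j) = 1 := by
    calc (RatFunc.X : RatFunc ℂ) ^ (j + j) = RatFunc.X ^ j * RatFunc.X ^ j := zpow_add₀ hu j j
    _ = RatFunc.X ^ j * RatFunc.X ^ (-j) := congrArg (fun y => (RatFunc.X : RatFunc ℂ)^j * y) h1
    _ = 1 := by rw [← zpow_add₀ hu]; simp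
  have h3 : (RatFunc.X : RatFunc ℂ) ^ ((j + j).toNat) = 1 := by
    have : ((j+j).toNat : ℤ) = j + j := Int.toNat_of_nonneg (by omega)
    rw [← zpow_natCast, this, h2]
  have h4 : (Polynomial.X : Polynomial ℂ) ^ ((j+j).toNat) = 1 := by
    apply RatFunc.algebraMap_injective ℂ
    rw [map_pow, map_one, RatFunc.algebraMap_X]
    exact h3
  have := congrArg Polynomial.natDegree h4
  simp [Polynomial.natDegree_X_pow] at this
  omega

lemma key (m : ℤ) :
    ((RatFunc.X : RatFunc ℂ) ^ (1:ℤ) + RatFunc.X ^ (-1:ℤ)) *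
      ((RatFunc.X : RatFunc ℂ) ^ (m+1) - RatFunc.X ^ (-(m+1))) =
    ((RatFunc.X : RatFunc ℂ) ^ m - RatFunc.X ^ (-m)) +
      ((RatFunc.X : RatFunc ℂ) ^ (m+2) - RatFunc.X ^ (-(m+2))) := by
  have hu : (RatFunc.X : RatFunc ℂ) ≠ 0 := RatFunc.X_ne_zero
  have h : ∀ a b : ℤ, (RatFunc.X : RatFunc ℂ) ^ a * RatFunc.X ^ b = RatFunc.X ^ (a+b) :=
    fun a b => (zpow_add₀ hu a b).symm
  rw [add_mul, mul_sub, mul_sub, h, h, h, h]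
  have e1 : (1:ℤ) + (m+1) = m + 2 := by ring
  have e2 : (1:ℤ) + -(m+1) = -m := by ring
  have e3 : (-1:ℤ) + (m+1) = m := by ring
  have e4 : (-1:ℤ) + -(m+1) = -(m+2) := by ring
  rw [e1, e2, e3, e4]; ring

/-- For every `n ≥ -(r+1)` there is a representation of `𝓑_{≥r}` in `ℂ(X)` extending
`q ↦ X` and sending `b_k` to `[n+k+1]/[n+k+2]`. -/
theorem box_algebra_rep (r : ℤ) :
    ∀ n : ℤ, -(r + 1) ≤ n →
      ∃ φ : BoxAlgebra r →+* RatFunc ℂ,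
        (∀ c : GroundRing, φ (algebraMap GroundRing (BoxAlgebra r) c) = laurentToRatFunc c) ∧
        (∀ k : {k : ℤ // r ≤ k},
          φ (Ideal.Quotient.mk (relIdeal r) (MvPolynomial.X k)) =
            ((RatFunc.X : RatFunc ℂ) ^ (n + (k : ℤ) + 1) - RatFunc.X ^ (-(n + (k : ℤ) + 1))) /
              ((RatFunc.X : RatFunc ℂ) ^ (n + (k : ℤ) + 2) -
                RatFunc.X ^ (-(n + (k : ℤ) + 2)))) := by
  intro n hn
  have hu : (RatFunc.X : RatFunc ℂ) ≠ 0 := RatFunc.X_ne_zero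
  set f : {k : ℤ // r ≤ k} → RatFunc ℂ := fun k =>
    ((RatFunc.X : RatFunc ℂ) ^ (n + (k : ℤ) + 1) - RatFunc.X ^ (-(n + (k : ℤ) + 1))) /
      ((RatFunc.X : RatFunc ℂ) ^ (n + (k : ℤ) + 2) - RatFunc.X ^ (-(n + (k : ℤ) + 2))) with hf
  set ψ : MvPolynomial {k : ℤ // r ≤ k} GroundRing →+* RatFunc ℂ :=
    MvPolynomial.eval₂Hom laurentToRatFunc.toRingHom f with hψ
  have hker : ∀ a ∈ relIdeal r, ψ a = 0 := by
    have hle : relIdeal r ≤ RingHom.ker ψ := by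
      rw [relIdeal, Ideal.span_le]
      rintro _ ⟨k, hk, hk', rfl⟩
      simp only [SetLike.mem_coe, RingHom.mem_ker, map_add, map_sub, map_mul, map_one, hψ,
        MvPolynomial.eval₂Hom_X', MvPolynomial.eval₂Hom_C]
      have hq : laurentToRatFunc.toRingHom qtwo
          = (RatFunc.X : RatFunc ℂ) ^ (1:ℤ) + RatFunc.X ^ (-1:ℤ) := by
        show laurentToRatFunc qtwo = _
        rw [qtwo, map_add, laurentToRatFunc_T, laurentToRatFunc_T]
      rw [hq]
      set m : ℤ := n + k with hm
      have hA : (RatFunc.X : RatFunc ℂ) ^ (m+1) - RatFunc.X ^ (-(m+1)) ≠ 0 :=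
        sne _ (by omega)
      have hB : (RatFunc.X : RatFunc ℂ) ^ (m+2) - RatFunc.X ^ (-(m+2)) ≠ 0 :=
        sne _ (by omega)
      have e0 : n + (k : ℤ) + 2 = m + 2 := by omega
      have e1 : n + (k : ℤ) + 1 = m + 1 := by omega
      have e2 : n + ((k : ℤ) - 1) + 1 = m := by omega
      have e3 : n + ((k : ℤ) - 1) + 2 = m + 1 := by omega
      simp only [hf, e0, e1, e2, e3]
      have hmul : ((RatFunc.X : RatFunc ℂ) ^ (m+1) - RatFunc.X ^ (-(m+1))) /
            ((RatFunc.X : RatFunc ℂ) ^ (m+2) - RatFunc.X ^ (-(m+2))) *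
          (((RatFunc.X : RatFunc ℂ) ^ m - RatFunc.X ^ (-m)) /
            ((RatFunc.X : RatFunc ℂ) ^ (m+1) - RatFunc.X ^ (-(m+1)))) =
          ((RatFunc.X : RatFunc ℂ) ^ m - RatFunc.X ^ (-m)) /
            ((RatFunc.X : RatFunc ℂ) ^ (m+2) - RatFunc.X ^ (-(m+2))) := by
        rw [div_mul_div_comm,
          mul_comm ((RatFunc.X : RatFunc ℂ) ^ (m+2) - RatFunc.X ^ (-(m+2)))
          ((RatFunc.X : RatFunc ℂ) ^ (m+1) - RatFunc.X ^ (-(m+1)))]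
        exact mul_div_mul_left _ _ hA
      rw [hmul, mul_div_assoc', key m, ← sub_div]
      have hnum : ((RatFunc.X : RatFunc ℂ) ^ m - RatFunc.X ^ (-m)) -
          (((RatFunc.X : RatFunc ℂ) ^ m - RatFunc.X ^ (-m)) +
            ((RatFunc.X : RatFunc ℂ) ^ (m+2) - RatFunc.X ^ (-(m+2)))) =
          -((RatFunc.X : RatFunc ℂ) ^ (m+2) - RatFunc.X ^ (-(m+2))) := by ring
      rw [hnum]
      have hfin : -((RatFunc.X : RatFunc ℂ) ^ (m+2) - RatFunc.X ^ (-(m+2))) /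
          ((RatFunc.X : RatFunc ℂ) ^ (m+2) - RatFunc.X ^ (-(m+2))) = -1 := by
        rw [div_eq_iff hB]
        ring
      rw [hfin]
      ring
    exact fun a ha => hle ha
  refine ⟨Ideal.Quotient.lift _ ψ hker, ?_, ?_⟩
  · intro c
    have : algebraMap GroundRing (BoxAlgebra r) c
        = Ideal.Quotient.mk (relIdeal r) (MvPolynomial.C c) := rfl
    rw [this, Ideal.Quotient.lift_mk]
    simp [hψ]
  · intro k
    rw [Ideal.Quotient.lift_mk]
    simp [hψ, hf]


end
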